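/- Let $E$ be a symmetric trace-free $n \times n$ real matrix ($n \ge 2$) with $E \ne 0$. Then equality $\operatorname{tr}(E^3) = -\frac{n-2}{\sqrt{n(n-1)}} (\operatorname{tr}(E^2))^{3/2}$ holds if and only if $E$ has eigenvalue $\lambda$ with multiplicity $n-1$ and eigenvalue $-(n-1)\lambda$ with multiplicity $1$, for some $\lambda > 0$. -/

import Mathlib

open scoped BigOperators


lemma trace_pow_eq_sum (n k : ℕ) (E : Matrix (Fin n) (Fin n) ℝ) (hE : E.IsHermitian) :
    (E ^ k).trace = ∑ i, hE.eigenvalues i ^ k := by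
  set U : Matrix (Fin n) (Fin n) ℝ := (hE.eigenvectorUnitary : Matrix (Fin n) (Fin n) ℝ) with hUdef
  set D : Matrix (Fin n) (Fin n) ℝ := Matrix.diagonal (RCLike.ofReal ∘ hE.eigenvalues) with hDdef
  have hU : U * star U = 1 := (Matrix.mem_unitaryGroup_iff).mp (hE.eigenvectorUnitary).2
  have hU' : star U * U = 1 := (Matrix.mem_unitaryGroup_iff').mp (hE.eigenvectorUnitary).2
  have key : (U * D * star U) ^ k = U * D ^ k * star U := by
    induction k with
    | zero => simpa using hU.symm
    | succ k ih =>
      rw [pow_succ, pow_succ, ih, Matrix.mul_assoc (U * D ^ k), ← Matrix.mul_assoc (star U),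
        ← Matrix.mul_assoc (star U), hU', Matrix.one_mul, ← Matrix.mul_assoc,
        ← Matrix.mul_assoc, Matrix.mul_assoc U]
  nth_rewrite 1 [hE.spectral_theorem]
  rw [Unitary.conjStarAlgAut_apply]
  rw [key, Matrix.trace_mul_cycle, hU', Matrix.one_mul,
    Matrix.diagonal_pow, Matrix.trace_diagonal]
  simp

open Finset

set_option maxHeartbeats 1000000 in
lemma scalar_case (n : ℕ) (hn : 2 ≤ n) (x : Fin n → ℝ)
    (h0 : ∑ i, x i = 0) (hs : 0 < ∑ i, x i ^ 2) :
    ∑ i, x i ^ 3 =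
      -((n - 2 : ℝ) / Real.sqrt (n * (n - 1))) * (∑ i, x i ^ 2) ^ ((3 : ℝ) / 2) ↔
    ∃ l : ℝ, 0 < l ∧ ∃ i : Fin n,
      x i = -(n - 1 : ℝ) * l ∧ ∀ j : Fin n, j ≠ i → x j = l := by
  haveI : NeZero n := ⟨by omega⟩
  have hn1 : (1 : ℝ) ≤ (n : ℝ) - 1 := by
    have : (2 : ℝ) ≤ (n : ℝ) := by exact_mod_cast hn
    linarith
  have hn1' : (0 : ℝ) < (n : ℝ) - 1 := by linarith
  have hne1 : ((n : ℝ) - 1) ≠ 0 := ne_of_gt hn1'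
  have hnn : (0 : ℝ) < (n : ℝ) := by linarith
  set s : ℝ := ∑ i, x i ^ 2 with hsdef
  set w : ℝ := Real.sqrt ((n : ℝ) * ((n : ℝ) - 1)) with hwdef
  have hw2 : w ^ 2 = (n : ℝ) * ((n : ℝ) - 1) := Real.sq_sqrt (by nlinarith)
  have hw : 0 < w := Real.sqrt_pos.2 (by nlinarith)
  set r : ℝ := Real.sqrt s with hrdef
  have hr2 : r ^ 2 = s := Real.sq_sqrt hs.le
  have hr : 0 < r := Real.sqrt_pos.2 hs
  have hrpow : s ^ ((3 : ℝ) / 2) = s * r := by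
    rw [hrdef, show (3 : ℝ) / 2 = 1 + 1 / 2 by norm_num, Real.rpow_add hs, Real.rpow_one,
      Real.sqrt_eq_rpow]
  rw [hrpow]
  set S3 : ℝ := ∑ i, x i ^ 3 with hS3def
  clear_value S3 r w s
  constructor
  · intro heq
    obtain ⟨i₀, -, hmin⟩ := Finset.exists_min_image univ x univ_nonempty
    set m : ℝ := x i₀ with hmdef
    clear_value m
    have hmin' : ∀ j, m ≤ x j := fun j => hmin j (mem_univ j)
    have hm : m < 0 := by
      by_contra hm
      push_neg at hm
      have hz : ∀ i ∈ univ, x i = 0 := by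
        intro i _
        have h1 : ∀ i ∈ (univ : Finset (Fin n)), 0 ≤ x i := fun i _ => le_trans hm (hmin' i)
        exact (Finset.sum_eq_zero_iff_of_nonneg h1).1 h0 i (mem_univ i)
      have hs0 : s = 0 := by
        rw [hsdef]
        exact Finset.sum_eq_zero fun i hi => by rw [hz i hi]; ring
      linarith
    -- Cauchy-Schwarz on shifted values
    have hA : (∑ i, (x i - m) ^ 2) ^ 2 ≤ (∑ i, (x i - m) ^ 3) * (∑ i, (x i - m)) := by
      have hcs := Finset.sum_mul_sq_le_sq_mul_sq univ
        (fun i => Real.sqrt (x i - m) * (x i - m)) (fun i => Real.sqrt (x i - m))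
      calc (∑ i, (x i - m) ^ 2) ^ 2
          = (∑ i, (Real.sqrt (x i - m) * (x i - m)) * Real.sqrt (x i - m)) ^ 2 := by
            congr 1; refine Finset.sum_congr rfl fun i _ => ?_
            rw [mul_comm, ← mul_assoc, Real.mul_self_sqrt (by linarith [hmin' i])]; ring
        _ ≤ (∑ i, (Real.sqrt (x i - m) * (x i - m)) ^ 2) * ∑ i, Real.sqrt (x i - m) ^ 2 := hcs
        _ = (∑ i, (x i - m) ^ 3) * (∑ i, (x i - m)) := by
            congr 1 <;> refine Finset.sum_congr rfl fun i _ => ?_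
            · rw [mul_pow, Real.sq_sqrt (by linarith [hmin' i])]; ring
            · rw [Real.sq_sqrt (by linarith [hmin' i])]
    have e1 : ∑ i, (x i - m) = -(n : ℝ) * m := by
      rw [Finset.sum_sub_distrib, h0, Finset.sum_const, card_univ, Fintype.card_fin,
        nsmul_eq_mul]
      ring
    have e2 : ∑ i, (x i - m) ^ 2 = s + (n : ℝ) * m ^ 2 := by
      have h1 : ∑ i, (x i - m) ^ 2 = ∑ i, (x i ^ 2 - 2 * m * x i + m ^ 2) :=
        Finset.sum_congr rfl fun i _ => by ring
      rw [h1, Finset.sum_add_distrib, Finset.sum_sub_distrib, ← Finset.mul_sum, h0,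
        Finset.sum_const, card_univ, Fintype.card_fin, nsmul_eq_mul, ← hsdef]
      ring
    have e3 : ∑ i, (x i - m) ^ 3 = S3 - 3 * m * s - (n : ℝ) * m ^ 3 := by
      have h1 : ∑ i, (x i - m) ^ 3 =
          ∑ i, (x i ^ 3 - 3 * m * x i ^ 2 + 3 * m ^ 2 * x i - m ^ 3) :=
        Finset.sum_congr rfl fun i _ => by ring
      rw [h1]
      rw [Finset.sum_sub_distrib, Finset.sum_add_distrib, Finset.sum_sub_distrib,
        ← Finset.mul_sum, ← Finset.mul_sum, h0, Finset.sum_const, card_univ,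
        Fintype.card_fin, nsmul_eq_mul, ← hsdef, ← hS3def]
      ring
    rw [e1, e2, e3] at hA
    -- hA': cleaned Cauchy-Schwarz
    have hA' : s ^ 2 ≤ -(n : ℝ) * m * S3 + (n : ℝ) * m ^ 2 * s := by nlinarith [hA]
    -- facts about erase sums
    have hsum : ∑ j ∈ univ.erase i₀, x j = -m := by
      have h2 : x i₀ + ∑ j ∈ univ.erase i₀, x j = ∑ j, x j :=
        Finset.add_sum_erase univ x (mem_univ i₀)
      rw [h0, ← hmdef] at h2; linarith
    have hsumsq : ∑ j ∈ univ.erase i₀, x j ^ 2 = s - m ^ 2 := by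
      have h2 : x i₀ ^ 2 + ∑ j ∈ univ.erase i₀, x j ^ 2 = ∑ j, x j ^ 2 :=
        Finset.add_sum_erase univ (fun j => x j ^ 2) (mem_univ i₀)
      rw [← hsdef, ← hmdef] at h2; linarith
    have hcard : ((univ.erase i₀).card : ℝ) = (n : ℝ) - 1 := by
      rw [card_erase_of_mem (mem_univ i₀), card_univ, Fintype.card_fin]
      have h1 : 1 ≤ n := le_trans one_le_two hn
      push_cast [Nat.cast_sub h1]; ring
    have hB : (n : ℝ) * m ^ 2 ≤ ((n : ℝ) - 1) * s := by
      have hcs := sq_sum_le_card_mul_sum_sq (s := univ.erase i₀) (f := x)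
      rw [hsum, hsumsq, hcard] at hcs
      nlinarith [hcs]
    have heqw : w * S3 = -((n : ℝ) - 2) * (s * r) := by
      rw [heq]; field_simp
    have hkey : (n : ℝ) * m ^ 2 = ((n : ℝ) - 1) * s := by
      by_contra hnekey
      clear hA heq e1 e2 e3 hmin hmin' hsum hsumsq hcard hsdef hS3def hwdef hrdef hmdef hrpow
      have hlt : (n : ℝ) * m ^ 2 < ((n : ℝ) - 1) * s := lt_of_le_of_ne hB hnekey
      have hu : 0 < -(n : ℝ) * m := by
        simpa [neg_mul, mul_neg] using mul_pos hnn (neg_pos.2 hm)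
      have hur : -(n : ℝ) * m < w * r := by
        have h1 : (-(n : ℝ) * m) ^ 2 < (w * r) ^ 2 := by
          rw [mul_pow, mul_pow, hw2, hr2]
          nlinarith [mul_lt_mul_of_pos_left hlt hnn]
        exact lt_of_pow_lt_pow_left₀ 2 (mul_pos hw hr).le h1
      -- multiply hA' by w, substitute heqw
      have h5 : w * s ^ 2 ≤ w * (-(n : ℝ) * m * S3 + (n : ℝ) * m ^ 2 * s) :=
        mul_le_mul_of_nonneg_left hA' hw.le
      have h7 : -(n : ℝ) * m * (w * S3) = -(n : ℝ) * m * (-((n : ℝ) - 2) * (s * r)) := by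
        rw [heqw]
      have h6 : w * s ^ 2 ≤ (n : ℝ) * m * ((n : ℝ) - 2) * s * r + (n : ℝ) * m ^ 2 * s * w := by
        nlinarith [h5, h7]
      have hP : 0 < (w * r - -(n : ℝ) * m) * (w * (-(n : ℝ) * m) + (n : ℝ) * r) :=
        mul_pos (sub_pos.2 hur) (by nlinarith [mul_pos hnn hr])
      have hPs : 0 < ((w * r - -(n : ℝ) * m) * (w * (-(n : ℝ) * m) + (n : ℝ) * r)) * s :=
        mul_pos hP hs
      have h6n := mul_le_mul_of_nonneg_left h6 hnn.le
      have e4 : (n : ℝ) * m * r * s * w ^ 2 = (n : ℝ) * m * r * s * ((n : ℝ) * ((n : ℝ) - 1)) := by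
        rw [hw2]
      have e5 : (n : ℝ) * w * s * r ^ 2 = (n : ℝ) * w * s * s := by rw [hr2]
      nlinarith [hPs, h6n, e4, e5]
    -- extract structure
    set l : ℝ := -m / ((n : ℝ) - 1) with hldef
    clear_value l
    have hml : m = -((n : ℝ) - 1) * l := by rw [hldef]; field_simp
    have hl : 0 < l := by rw [hldef]; exact div_pos (by linarith) hn1'
    have h9 : s = (n : ℝ) * ((n : ℝ) - 1) * l ^ 2 := by
      have h := hkey
      rw [hml] at h
      apply mul_left_cancel₀ hne1
      linear_combination -h
    refine ⟨l, hl, i₀, by rw [← hmdef, hml], ?_⟩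
    have hzero : ∑ j ∈ univ.erase i₀, (x j - l) ^ 2 = 0 := by
      have expand : ∑ j ∈ univ.erase i₀, (x j - l) ^ 2 =
          (∑ j ∈ univ.erase i₀, x j ^ 2) - 2 * l * (∑ j ∈ univ.erase i₀, x j)
            + ((univ.erase i₀).card : ℝ) * l ^ 2 := by
        have h1 : ∑ j ∈ univ.erase i₀, (x j - l) ^ 2 =
            ∑ j ∈ univ.erase i₀, (x j ^ 2 - 2 * l * x j + l ^ 2) :=
          Finset.sum_congr rfl fun i _ => by ring
        rw [h1, Finset.sum_add_distrib, Finset.sum_sub_distrib, ← Finset.mul_sum,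
          Finset.sum_const, nsmul_eq_mul]
      rw [expand, hsum, hsumsq, hcard, hml, h9]
      ring
    intro j hj
    have hj' : j ∈ univ.erase i₀ := mem_erase.2 ⟨hj, mem_univ j⟩
    have hz := (Finset.sum_eq_zero_iff_of_nonneg (fun i _ => sq_nonneg (x i - l))).1 hzero j hj'
    have : x j - l = 0 := by nlinarith [hz]
    linarith
  · rintro ⟨l, hl, i, hi, hrest⟩
    have h1 : 1 ≤ n := le_trans one_le_two hn
    have hsum2 : s = (n : ℝ) * ((n : ℝ) - 1) * l ^ 2 := by
      rw [hsdef, ← Finset.add_sum_erase univ (fun j => x j ^ 2) (mem_univ i)]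
      rw [Finset.sum_congr rfl (fun j hj => by rw [hrest j (mem_erase.1 hj).1]),
        Finset.sum_const, card_erase_of_mem (mem_univ i), card_univ, Fintype.card_fin,
        nsmul_eq_mul, hi]
      push_cast [Nat.cast_sub h1]
      ring
    have hsum3 : S3 = -((n : ℝ) - 1) ^ 3 * l ^ 3 + ((n : ℝ) - 1) * l ^ 3 := by
      rw [hS3def, ← Finset.add_sum_erase univ (fun j => x j ^ 3) (mem_univ i)]
      rw [Finset.sum_congr rfl (fun j hj => by rw [hrest j (mem_erase.1 hj).1]),
        Finset.sum_const, card_erase_of_mem (mem_univ i), card_univ, Fintype.card_fin,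
        nsmul_eq_mul, hi]
      push_cast [Nat.cast_sub h1]
      ring
    have hrl : r = w * l := by
      rw [hrdef, hsum2, show (n : ℝ) * ((n : ℝ) - 1) * l ^ 2 = (w * l) ^ 2 by
        rw [mul_pow, hw2], Real.sqrt_sq (by positivity)]
    rw [hsum3, hsum2, hrl]
    field_simp
    ring
/-- For a nonzero symmetric trace-free `n × n` real matrix `E` (`n ≥ 2`),
equality `tr(E³) = -((n-2)/√(n(n-1))) (tr(E²))^{3/2}` holds iff `E` has eigenvalue `λ` of
multiplicity `n-1` and eigenvalue `-(n-1)λ` of multiplicity `1`, for some `λ > 0`. -/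
theorem cubic_trace_equality_case (n : ℕ) (hn : 2 ≤ n)
    (E : Matrix (Fin n) (Fin n) ℝ) (hE : E.IsHermitian) (htr : E.trace = 0)
    (hne : E ≠ 0) :
    (E ^ 3).trace =
        -((n - 2 : ℝ) / Real.sqrt (n * (n - 1))) * ((E ^ 2).trace) ^ ((3 : ℝ) / 2) ↔
      ∃ l : ℝ, 0 < l ∧ ∃ i : Fin n,
        hE.eigenvalues i = -(n - 1 : ℝ) * l ∧ ∀ j : Fin n, j ≠ i → hE.eigenvalues j = l := by
  have h3 := trace_pow_eq_sum n 3 E hE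
  have h2 := trace_pow_eq_sum n 2 E hE
  have h0 : ∑ i, hE.eigenvalues i = 0 := by
    have h1 := trace_pow_eq_sum n 1 E hE
    rw [pow_one, htr] at h1
    simpa using h1.symm
  have hpos : 0 < (E ^ 2).trace := by
    have hsymm : ∀ i j, E j i = E i j := by
      intro i j
      have := congrFun (congrFun hE i) j
      simpa [Matrix.conjTranspose_apply] using this
    have hexp : (E ^ 2).trace = ∑ i, ∑ j, E i j ^ 2 := by
      rw [pow_two, Matrix.trace]
      refine Finset.sum_congr rfl fun i _ => ?_
      rw [Matrix.diag_apply, Matrix.mul_apply]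
      exact Finset.sum_congr rfl fun j _ => by rw [hsymm i j]; ring
    rw [hexp]
    obtain ⟨i, j, hij⟩ : ∃ i j, E i j ≠ 0 := by
      by_contra h
      push_neg at h
      exact hne (Matrix.ext fun i j => h i j)
    refine Finset.sum_pos' (fun i _ => Finset.sum_nonneg fun j _ => sq_nonneg _) ?_
    exact ⟨i, Finset.mem_univ i, Finset.sum_pos' (fun j _ => sq_nonneg _)
      ⟨j, Finset.mem_univ j, by positivity⟩⟩
  rw [h2] at hpos
  rw [h3, h2]
  exact scalar_case n hn hE.eigenvalues h0 hpos
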